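/- Define an equivalence relation on C(Σ, M) by declaring f ∼ h if and only if there exists a nonzero a ∈ ℂ with h = f ∘ g_a (this is an equivalence relation because a ↦ g_a is a group action of ℂ* by homeomorphisms of Σ). Then the quotient space C(Σ, M)/∼, equipped with the quotient topology induced by the uniform metric topology on C(Σ, M), is a Hausdorff (T₂) topological space. (The space of unparametrized continuous maps is Hausdorff.) -/

import Mathlib

open OnePoint

/-- The reparametrization `g_a : Σ → Σ` of the Riemann sphere `Σ = OnePoint ℂ`
extending `z ↦ a · z` on `ℂ` and fixing the point at infinity. -/
noncomputable def gA (a : ℂ) (ha : a ≠ 0) : C(OnePoint ℂ, OnePoint ℂ) where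
  toFun := OnePoint.map (fun z => a * z)
  continuous_toFun := (Homeomorph.onePointCongr (Homeomorph.mulLeft₀ a ha)).continuous

@[simp] lemma gA_coe (a : ℂ) (ha : a ≠ 0) (z : ℂ) :
    gA a ha (z : OnePoint ℂ) = ((a * z : ℂ) : OnePoint ℂ) := rfl

@[simp] lemma gA_infty (a : ℂ) (ha : a ≠ 0) : gA a ha ∞ = ∞ := rfl

section AuxLemmas
open Filter Topology Set

variable {M : Type*} [MetricSpace M] [CompactSpace M]

lemma comp_gA_comp_gA_inv (a : ℂ) (ha : a ≠ 0) (F : C(OnePoint ℂ, M)) :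
    (F.comp (gA a ha)).comp (gA a⁻¹ (inv_ne_zero ha)) = F := by
  ext x; induction x using OnePoint.rec <;> simp [← mul_assoc, mul_inv_cancel₀ ha]

lemma comp_gA_inv_comp_gA (a : ℂ) (ha : a ≠ 0) (F : C(OnePoint ℂ, M)) :
    (F.comp (gA a⁻¹ (inv_ne_zero ha))).comp (gA a ha) = F := by
  ext x; induction x using OnePoint.rec <;> simp [← mul_assoc, inv_mul_cancel₀ ha]

lemma comp_gA_one (F : C(OnePoint ℂ, M)) : F.comp (gA 1 one_ne_zero) = F := by
  ext x; induction x using OnePoint.rec <;> simp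

lemma dist_comp_gA (a : ℂ) (ha : a ≠ 0) (F G : C(OnePoint ℂ, M)) :
    dist (F.comp (gA a ha)) (G.comp (gA a ha)) = dist F G := by
  have key : ∀ (b : ℂ) (hb : b ≠ 0) (F G : C(OnePoint ℂ, M)),
      dist (F.comp (gA b hb)) (G.comp (gA b hb)) ≤ dist F G := by
    intro b hb F G
    rw [ContinuousMap.dist_le dist_nonneg]
    intro x
    exact ContinuousMap.dist_apply_le_dist (f := F) (g := G) (gA b hb x)
  refine le_antisymm (key a ha F G) ?_
  have h2 := key a⁻¹ (inv_ne_zero ha) (F.comp (gA a ha)) (G.comp (gA a ha))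
  rwa [comp_gA_comp_gA_inv, comp_gA_comp_gA_inv] at h2

lemma key_tendsto {X : Type*} [TopologicalSpace X] [CompactSpace X]
    {F : ℕ → C(X, M)} {f : C(X, M)} (hF : Tendsto F atTop (𝓝 f))
    {y : ℕ → X} {x : X} (hy : Tendsto y atTop (𝓝 x)) :
    Tendsto (fun n => F n (y n)) atTop (𝓝 (f x)) := by
  rw [tendsto_iff_dist_tendsto_zero]
  have h1 : Tendsto (fun n => dist (F n) f) atTop (𝓝 0) :=
    tendsto_iff_dist_tendsto_zero.1 hF
  have h2 : Tendsto (fun n => dist (f (y n)) (f x)) atTop (𝓝 0) :=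
    tendsto_iff_dist_tendsto_zero.1 ((f.continuous.tendsto x).comp hy)
  refine squeeze_zero (fun n => dist_nonneg) (fun n => ?_) (by simpa using h1.add h2)
  calc dist (F n (y n)) (f x) ≤ dist (F n (y n)) (f (y n)) + dist (f (y n)) (f x) :=
        dist_triangle _ _ _
    _ ≤ dist (F n) f + dist (f (y n)) (f x) :=
        add_le_add_left (ContinuousMap.dist_apply_le_dist (f := F n) (g := f) (y n)) _

lemma relA {F H : ℕ → C(OnePoint ℂ, M)} {f h : C(OnePoint ℂ, M)}
    (hF : Tendsto F atTop (𝓝 f)) (hH : Tendsto H atTop (𝓝 h))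
    {a : ℕ → ℂ} (haz : ∀ n, a n ≠ 0)
    (hrel : ∀ n, H n = (F n).comp (gA (a n) (haz n)))
    {b : ℂ} (hb : b ≠ 0) (hab : Tendsto a atTop (𝓝 b)) :
    h = f.comp (gA b hb) := by
  ext x
  have h1 : Tendsto (fun n => H n x) atTop (𝓝 (h x)) :=
    key_tendsto hH tendsto_const_nhds
  have hy : Tendsto (fun n => gA (a n) (haz n) x) atTop (𝓝 (gA b hb x)) := by
    induction x using OnePoint.rec with
    | infty => simpa using (tendsto_const_nhds : Tendsto (fun _ : ℕ => (∞ : OnePoint ℂ)) atTop _)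
    | coe z =>
      simp only [gA_coe]
      exact (OnePoint.continuous_coe.tendsto _).comp (hab.mul_const z)
  have h2 : Tendsto (fun n => F n (gA (a n) (haz n) x)) atTop (𝓝 (f (gA b hb x))) :=
    key_tendsto hF hy
  have he : ∀ n, H n x = F n (gA (a n) (haz n) x) := fun n => by rw [hrel n]; rfl
  exact tendsto_nhds_unique (by simpa only [he] using h1) h2

lemma relB {F H : ℕ → C(OnePoint ℂ, M)} {f h : C(OnePoint ℂ, M)}
    (hF : Tendsto F atTop (𝓝 f)) (hH : Tendsto H atTop (𝓝 h))
    {a : ℕ → ℂ} (haz : ∀ n, a n ≠ 0)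
    (hrel : ∀ n, H n = (F n).comp (gA (a n) (haz n)))
    (hab : Tendsto a atTop (𝓝 0)) :
    h = f := by
  set c : M := f ((0 : ℂ) : OnePoint ℂ) with hc
  have hz : ∀ z : ℂ, h (z : OnePoint ℂ) = c := by
    intro z
    have h1 : Tendsto (fun n => H n (z : OnePoint ℂ)) atTop (𝓝 (h z)) :=
      key_tendsto hH tendsto_const_nhds
    have hy : Tendsto (fun n => ((a n * z : ℂ) : OnePoint ℂ)) atTop
        (𝓝 ((0 : ℂ) : OnePoint ℂ)) := by
      have := (OnePoint.continuous_coe.tendsto (0:ℂ)).comp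
        (by simpa using hab.mul_const z)
      exact this
    have h2 : Tendsto (fun n => F n ((a n * z : ℂ) : OnePoint ℂ)) atTop (𝓝 c) :=
      key_tendsto hF hy
    have he : ∀ n, H n (z : OnePoint ℂ) = F n ((a n * z : ℂ) : OnePoint ℂ) := fun n => by
      rw [hrel n]; rfl
    exact tendsto_nhds_unique (by simpa only [he] using h1) h2
  have hconst : h = ContinuousMap.const (OnePoint ℂ) c := by
    have hd : Dense (Set.range ((↑) : ℂ → OnePoint ℂ)) := OnePoint.denseRange_coe
    have := Continuous.ext_on hd h.continuous continuous_const
      (by rintro _ ⟨z, rfl⟩; exact hz z)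
    ext x; exact congrFun this x
  have hdist : ∀ n, dist (F n) (ContinuousMap.const (OnePoint ℂ) c) = dist (H n) h := by
    intro n
    rw [hrel n, hconst, ← dist_comp_gA (a n) (haz n) (F n) (ContinuousMap.const _ c)]
    congr 1
  have hd0 : Tendsto (fun n => dist (F n) (ContinuousMap.const (OnePoint ℂ) c)) atTop (𝓝 0) := by
    simp only [hdist]
    exact tendsto_iff_dist_tendsto_zero.1 hH
  have hd1 : Tendsto (fun n => dist (F n) (ContinuousMap.const (OnePoint ℂ) c)) atTop
      (𝓝 (dist f (ContinuousMap.const (OnePoint ℂ) c))) := hF.dist tendsto_const_nhds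
  have : f = ContinuousMap.const (OnePoint ℂ) c :=
    dist_eq_zero.1 (tendsto_nhds_unique hd1 hd0)
  rw [hconst, this]

end AuxLemmas

/-- The equivalence relation on `C(Σ, M)` identifying `f` with its reparametrizations
`f ∘ g_a`, `a ∈ ℂ*`. -/
def reparamSetoid (M : Type*) [MetricSpace M] [CompactSpace M] :
    Setoid C(OnePoint ℂ, M) where
  r f h := ∃ (a : ℂ) (ha : a ≠ 0), h = f.comp (gA a ha)
  iseqv := by
    constructor
    · intro f
      exact ⟨1, one_ne_zero, by ext x; induction x using OnePoint.rec <;> simp⟩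
    · rintro f h ⟨a, ha, rfl⟩
      refine ⟨a⁻¹, inv_ne_zero ha, ?_⟩
      ext x; induction x using OnePoint.rec <;>
        simp [← mul_assoc, mul_inv_cancel₀ ha]
    · rintro f g h ⟨a, ha, rfl⟩ ⟨b, hb, rfl⟩
      refine ⟨a * b, mul_ne_zero ha hb, ?_⟩
      ext x; induction x using OnePoint.rec <;> simp [mul_assoc]

section AuxLemmas2
open Filter Topology Set
variable {M : Type*} [MetricSpace M] [CompactSpace M]

lemma continuous_comp_gA (a : ℂ) (ha : a ≠ 0) :
    Continuous (fun F : C(OnePoint ℂ, M) => F.comp (gA a ha)) :=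
  (Isometry.of_dist_eq (fun F G => dist_comp_gA a ha F G)).continuous

lemma isOpenMap_mk : IsOpenMap (Quotient.mk (reparamSetoid M)) := by
  intro U hU
  rw [← isQuotientMap_quotient_mk'.isOpen_preimage]
  have hsat : @Quotient.mk' _ (reparamSetoid M) ⁻¹' (Quotient.mk (reparamSetoid M) '' U) =
      ⋃ (a : {a : ℂ // a ≠ 0}), (fun F : C(OnePoint ℂ, M) => F.comp (gA a.1 a.2)) ⁻¹' U := by
    ext f
    simp only [Set.mem_preimage, Set.mem_image, Set.mem_iUnion]
    constructor
    · rintro ⟨u, hu, huf⟩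
      obtain ⟨a, ha, rfl⟩ : ∃ (a : ℂ) (ha : a ≠ 0), f = u.comp (gA a ha) :=
        Quotient.exact huf
      exact ⟨⟨a⁻¹, inv_ne_zero ha⟩, by rwa [comp_gA_comp_gA_inv]⟩
    · rintro ⟨a, hfU⟩
      refine ⟨f.comp (gA a.1 a.2), hfU, ?_⟩
      exact Quotient.sound ((reparamSetoid M).symm ⟨a.1, a.2, rfl⟩)
  rw [hsat]
  exact isOpen_iUnion fun a => hU.preimage (continuous_comp_gA a.1 a.2)


end AuxLemmas2

open Filter Topology Set in
/-- The quotient of `C(Σ, M)` by the `ℂ*`-reparametrization action, with the quotient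
topology, is Hausdorff: the space of unparametrized continuous maps is Hausdorff. -/
theorem unparametrized_maps_Hausdorff (M : Type*) [MetricSpace M] [CompactSpace M] :
    T2Space (Quotient (reparamSetoid M)) := by
  rw [t2_iff_isClosed_diagonal]
  have hq : IsOpenQuotientMap (Quotient.mk (reparamSetoid M)) :=
    ⟨Quotient.mk''_surjective, continuous_quotient_mk', isOpenMap_mk⟩
  rw [← (hq.prodMap hq).isQuotientMap.isClosed_preimage]
  have hset : Prod.map (Quotient.mk (reparamSetoid M)) (Quotient.mk (reparamSetoid M)) ⁻¹'
      (Set.diagonal _) =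
      {p : C(OnePoint ℂ, M) × C(OnePoint ℂ, M) |
        ∃ (a : ℂ) (ha : a ≠ 0), p.2 = p.1.comp (gA a ha)} := by
    ext p
    simp only [Set.mem_preimage, Prod.map, Set.mem_diagonal_iff, Set.mem_setOf_eq]
    exact ⟨fun hp => Quotient.exact hp, fun hp => Quotient.sound hp⟩
  rw [hset]
  apply IsSeqClosed.isClosed
  intro P p hmem hconv
  choose a haz hrel using hmem
  set F : ℕ → C(OnePoint ℂ, M) := fun n => (P n).1 with hFdef
  set H : ℕ → C(OnePoint ℂ, M) := fun n => (P n).2 with hHdef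
  have hF : Tendsto F atTop (𝓝 p.1) := (continuous_fst.tendsto p).comp hconv
  have hH : Tendsto H atTop (𝓝 p.2) := (continuous_snd.tendsto p).comp hconv
  set c : ℕ → ℂ := fun n => if ‖a n‖ ≤ 1 then a n else (a n)⁻¹ with hcdef
  have hcball : ∀ n, c n ∈ Metric.closedBall (0 : ℂ) 1 := by
    intro n
    rw [mem_closedBall_zero_iff, hcdef]
    dsimp only
    split_ifs with hn
    · exact hn
    · rw [norm_inv]
      exact inv_le_one_of_one_le₀ (le_of_not_ge hn)
  obtain ⟨b, -, φ, hφ, hcφ⟩ := (isCompact_closedBall (0 : ℂ) 1).tendsto_subseq hcball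
  by_cases hcase : ∃ᶠ n in atTop, ‖a (φ n)‖ ≤ 1
  · obtain ⟨ψ, hψ, hψP⟩ := Filter.extraction_of_frequently_atTop hcase
    have hmono : StrictMono (fun n => φ (ψ n)) := hφ.comp hψ
    have hFsub : Tendsto (fun n => F (φ (ψ n))) atTop (𝓝 p.1) :=
      hF.comp hmono.tendsto_atTop
    have hHsub : Tendsto (fun n => H (φ (ψ n))) atTop (𝓝 p.2) :=
      hH.comp hmono.tendsto_atTop
    have h1 : Tendsto (fun n => a (φ (ψ n))) atTop (𝓝 b) := by
      refine Tendsto.congr (fun n => ?_) (hcφ.comp hψ.tendsto_atTop)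
      simp only [Function.comp_apply, hcdef]
      rw [if_pos (hψP n)]
    by_cases hb0 : b = 0
    · have heq : p.2 = p.1 :=
        relB hFsub hHsub (fun n => haz _) (fun n => hrel _) (hb0 ▸ h1)
      exact ⟨1, one_ne_zero, by rw [heq, comp_gA_one]⟩
    · exact ⟨b, hb0, relA hFsub hHsub (fun n => haz _) (fun n => hrel _) hb0 h1⟩
  · have hfreq : ∃ᶠ n in atTop, ¬ ‖a (φ n)‖ ≤ 1 :=
      (Filter.not_frequently.1 hcase).frequently
    obtain ⟨ψ, hψ, hψP⟩ := Filter.extraction_of_frequently_atTop hfreq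
    have hmono : StrictMono (fun n => φ (ψ n)) := hφ.comp hψ
    have hFsub : Tendsto (fun n => F (φ (ψ n))) atTop (𝓝 p.1) :=
      hF.comp hmono.tendsto_atTop
    have hHsub : Tendsto (fun n => H (φ (ψ n))) atTop (𝓝 p.2) :=
      hH.comp hmono.tendsto_atTop
    have h1 : Tendsto (fun n => (a (φ (ψ n)))⁻¹) atTop (𝓝 b) := by
      refine Tendsto.congr (fun n => ?_) (hcφ.comp hψ.tendsto_atTop)
      simp only [Function.comp_apply, hcdef]
      rw [if_neg (hψP n)]
    by_cases hb0 : b = 0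
    · have hrel' : ∀ n, F (φ (ψ n)) =
          (H (φ (ψ n))).comp (gA (a (φ (ψ n)))⁻¹ (inv_ne_zero (haz _))) := by
        intro n
        show (P (φ (ψ n))).1 = ((P (φ (ψ n))).2).comp _
        rw [hrel (φ (ψ n))]
        exact (comp_gA_comp_gA_inv _ (haz _) _).symm
      have heq : p.1 = p.2 :=
        relB hHsub hFsub (fun n => inv_ne_zero (haz _)) hrel' (hb0 ▸ h1)
      exact ⟨1, one_ne_zero, by rw [← heq, comp_gA_one]⟩
    · have h2 : Tendsto (fun n => a (φ (ψ n))) atTop (𝓝 b⁻¹) := by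
        simpa using h1.inv₀ hb0
      exact ⟨b⁻¹, inv_ne_zero hb0,
        relA hFsub hHsub (fun n => haz _) (fun n => hrel _) (inv_ne_zero hb0) h2⟩
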